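/- arXiv:0801.2234 — 2 statements merged into one kernel-verified Lean document; each statement's English description precedes it below -/
import Mathlib

section
/- Let F be an entire function on ℂ, let C > 0, and suppose |F(w)| ≤ 3C·e^{|w|²} for all w, and |F(w)| ≤ C on the two rays {r e^{iθ₀} : r ≥ 0} and {r e^{iθ₁} : r ≥ 0} where 0 ≤ θ₀ < θ₁ and θ₁ - θ₀ < π/2. Then |F(w)| ≤ C for all w = r e^{iθ} with θ₀ ≤ θ ≤ θ₁. -/
open Real Complex

theorem phragmen_lindelof_sector (F : ℂ → ℂ) (hF : Differentiable ℂ F) (C : ℝ) (hC : 0 < C)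
    (θ₀ θ₁ : ℝ) (h0 : 0 ≤ θ₀) (h01 : θ₀ < θ₁) (hlt : θ₁ - θ₀ < π / 2)
    (hgrowth : ∀ w : ℂ, ‖F w‖ ≤ 3 * C * Real.exp (‖w‖ ^ 2))
    (hray0 : ∀ r : ℝ, 0 ≤ r → ‖F (r * Complex.exp (θ₀ * Complex.I))‖ ≤ C)
    (hray1 : ∀ r : ℝ, 0 ≤ r → ‖F (r * Complex.exp (θ₁ * Complex.I))‖ ≤ C) :
    ∀ r θ : ℝ, 0 ≤ r → θ₀ ≤ θ → θ ≤ θ₁ → ‖F (r * Complex.exp (θ * Complex.I))‖ ≤ C := by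
  intro r θ hr hθ0 hθ1
  rcases eq_or_lt_of_le hr with hr0 | hr0
  · have : (r : ℂ) * Complex.exp (θ * Complex.I) = (0 : ℝ) * Complex.exp (θ₀ * Complex.I) := by
      rw [← hr0]; simp
    rw [this]
    exact hray0 0 le_rfl
  -- exp of a point with given real and imaginary part
  have key : ∀ z : ℂ, Complex.exp z = (Real.exp z.re : ℝ) * Complex.exp (z.im * Complex.I) := by
    intro z
    rw [Complex.ofReal_exp, ← Complex.exp_add]
    congr 1
    simp [Complex.ext_iff]
  have main : ∀ z : ℂ, θ₀ ≤ z.im → z.im ≤ θ₁ → ‖F (Complex.exp z)‖ ≤ C := by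
    intro z hza hzb
    refine PhragmenLindelof.horizontal_strip (f := fun z => F (Complex.exp z)) (a := θ₀) (b := θ₁)
      ?_ ?_ ?_ ?_ hza hzb
    · exact (hF.comp Complex.differentiable_exp).diffContOnCl
    · refine ⟨2, ?_, 1, ?_⟩
      · rw [lt_div_iff₀ (by linarith)]
        linarith
      · refine Asymptotics.IsBigO.of_bound (3 * C) ?_
        filter_upwards with z
        have h1 : ‖F (Complex.exp z)‖ ≤ 3 * C * Real.exp (‖Complex.exp z‖ ^ 2) :=
          hgrowth _
        have h2 : ‖Complex.exp z‖ ^ 2 = Real.exp (2 * z.re) := by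
          rw [Complex.norm_exp, ← Real.exp_nat_mul]
          ring_nf
        have h3 : Real.exp (2 * z.re) ≤ Real.exp (2 * |z.re|) := by
          apply Real.exp_le_exp.2
          have := le_abs_self z.re
          linarith
        calc ‖F (Complex.exp z)‖ ≤ 3 * C * Real.exp (Real.exp (2 * z.re)) := by
              rwa [← h2]
          _ ≤ 3 * C * ‖Real.exp (1 * Real.exp (2 * |z.re|))‖ := by
              rw [Real.norm_eq_abs, Real.abs_exp, one_mul]
              have := Real.exp_le_exp.2 h3
              nlinarith [this]
    · intro w hw
      show ‖F (Complex.exp w)‖ ≤ C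
      rw [key w, hw]
      exact hray0 _ (Real.exp_nonneg _)
    · intro w hw
      show ‖F (Complex.exp w)‖ ≤ C
      rw [key w, hw]
      exact hray1 _ (Real.exp_nonneg _)
  have hz : (r : ℂ) * Complex.exp (θ * Complex.I) =
      Complex.exp ((Real.log r : ℂ) + θ * Complex.I) := by
    rw [Complex.exp_add]
    congr 1
    rw [← Complex.ofReal_exp, Real.exp_log hr0]
  rw [hz]
  exact main _ (by simp [hθ0]) (by simp [hθ1])
end

section
/- For w ∈ (0,1) and x ∈ ℝ, Mehler's formula gives Σ_{k≥0} (φ_k(x))² w^k = √2 · (1-w²)^{-1/2} · exp(-((1-w)/(1+w)) x²), where φ_k are the normalized Hermite functions. -/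
open Real MeasureTheory Filter Set
open scoped Topology Nat ENNReal NNReal

/-- Physicists' Hermite polynomials, as functions. -/
noncomputable def physHermiteFun : ℕ → ℝ → ℝ
  | 0, _ => 1
  | 1, x => 2 * x
  | (n + 2), x => 2 * x * physHermiteFun (n + 1) x - 2 * (n + 1) * physHermiteFun n x

/-- Hermite functions, normalized with respect to the measure dx/√(2π). -/
noncomputable def hermiteFun (n : ℕ) (x : ℝ) : ℝ :=
  (2 * π) ^ ((1 : ℝ) / 4) * (Real.sqrt (2 ^ n * Nat.factorial n * Real.sqrt π))⁻¹
    * physHermiteFun n x * Real.exp (-x ^ 2 / 2)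

namespace MehlerAux

noncomputable def f (x : ℝ) (k : ℕ) (t : ℝ) : ℂ :=
  ((x : ℂ) + t * Complex.I) ^ k * Complex.exp (-(t:ℂ)^2)

noncomputable def HI (k : ℕ) (x : ℝ) : ℂ := ∫ t : ℝ, f x k t

lemma integrable_abs_aux (c : ℝ) (k : ℕ) :
    Integrable (fun t : ℝ => (c + |t|) ^ k * Real.exp (-t ^ 2)) := by
  have habs : ∀ j : ℕ, Integrable (fun t : ℝ => |t| ^ j * Real.exp (-t ^ 2)) := by
    intro j
    have h1 : Integrable (fun t : ℝ => t ^ ((j : ℝ)) * Real.exp (-1 * t ^ 2)) :=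
      integrable_rpow_mul_exp_neg_mul_sq one_pos
        (lt_of_lt_of_le (by norm_num) (Nat.cast_nonneg j))
    simp_rw [Real.rpow_natCast] at h1
    refine h1.abs.congr (Eventually.of_forall fun t => ?_)
    simp [abs_mul, abs_pow, Real.abs_exp]
  have hfun : (fun t : ℝ => (c + |t|) ^ k * Real.exp (-t ^ 2))
      = fun t : ℝ => ∑ m ∈ Finset.range (k + 1),
          (c ^ m * (Nat.choose k m : ℝ)) * (|t| ^ (k - m) * Real.exp (-t ^ 2)) := by
    funext t
    rw [add_pow, Finset.sum_mul]
    exact Finset.sum_congr rfl fun m _ => by ring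
  rw [hfun]
  exact integrable_finset_sum _ fun m _ => ((habs (k - m)).const_mul _)

lemma norm_base_le (x t : ℝ) : ‖(x : ℂ) + t * Complex.I‖ ≤ |x| + |t| := by
  refine (norm_add_le _ _).trans ?_
  simp [Complex.norm_real, Complex.norm_I]

lemma norm_f (x : ℝ) (k : ℕ) (t : ℝ) :
    ‖f x k t‖ = ‖(x : ℂ) + t * Complex.I‖ ^ k * Real.exp (-t ^ 2) := by
  have h : (-(t:ℂ)^2) = ((-t^2 : ℝ) : ℂ) := by push_cast; ring
  rw [f, norm_mul, norm_pow, h]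
  rw [Complex.norm_exp, Complex.ofReal_re]

lemma norm_f_le (x : ℝ) (k : ℕ) (t : ℝ) :
    ‖f x k t‖ ≤ (|x| + |t|) ^ k * Real.exp (-t ^ 2) := by
  rw [norm_f]
  exact mul_le_mul_of_nonneg_right
    (pow_le_pow_left₀ (norm_nonneg _) (norm_base_le x t) k) (Real.exp_pos _).le

lemma continuous_f (x : ℝ) (k : ℕ) : Continuous (f x k) := by
  unfold f
  fun_prop

lemma integrable_f (x : ℝ) (k : ℕ) : Integrable (f x k) :=
  (integrable_abs_aux |x| k).mono' (continuous_f x k).aestronglyMeasurable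
    (Eventually.of_forall fun t => norm_f_le x k t)

lemma integrable_mul_f (x : ℝ) (k : ℕ) :
    Integrable (fun t : ℝ => (t : ℂ) * f x k t) := by
  refine (integrable_abs_aux |x| (k+1)).mono'
    (((Complex.continuous_ofReal).mul (continuous_f x k)).aestronglyMeasurable)
    (Eventually.of_forall fun t => ?_)
  rw [norm_mul, Complex.norm_real, Real.norm_eq_abs]
  calc |t| * ‖f x k t‖ ≤ (|x| + |t|) * ((|x| + |t|) ^ k * Real.exp (-t ^ 2)) := by
        apply mul_le_mul _ (norm_f_le x k t) (norm_nonneg _) (by positivity)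
        simp [abs_nonneg, le_add_iff_nonneg_left]
    _ = (|x| + |t|) ^ (k+1) * Real.exp (-t ^ 2) := by ring

lemma tendsto_abs_aux (c : ℝ) (hc : 0 ≤ c) (k : ℕ) :
    Tendsto (fun t : ℝ => (c + |t|) ^ k * Real.exp (-t ^ 2)) atTop (𝓝 0) := by
  apply squeeze_zero' (Eventually.of_forall fun t => by positivity)
    (g := fun t : ℝ => (2:ℝ) ^ k * (t ^ k * Real.exp (-t)))
  · filter_upwards [eventually_ge_atTop (max 1 c)] with t ht
    have ht1 : (1:ℝ) ≤ t := le_trans (le_max_left _ _) ht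
    have htc : c ≤ t := le_trans (le_max_right _ _) ht
    have h0 : (0:ℝ) < t := lt_of_lt_of_le one_pos ht1
    have habs : |t| = t := abs_of_pos h0
    have h1 : (c + |t|) ^ k ≤ (2 * t) ^ k := by
      apply pow_le_pow_left₀ (by positivity)
      rw [habs]; linarith
    have h2 : Real.exp (-t ^ 2) ≤ Real.exp (-t) := by
      apply Real.exp_le_exp.2
      nlinarith
    calc (c + |t|) ^ k * Real.exp (-t ^ 2) ≤ (2*t) ^ k * Real.exp (-t) := by
          apply mul_le_mul h1 h2 (Real.exp_pos _).le (by positivity)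
      _ = (2:ℝ) ^ k * (t ^ k * Real.exp (-t)) := by rw [mul_pow]; ring
  · have := (tendsto_pow_mul_exp_neg_atTop_nhds_zero k).const_mul ((2:ℝ)^k)
    simpa using this

lemma tendsto_f_atTop (x : ℝ) (k : ℕ) : Tendsto (f x k) atTop (𝓝 0) := by
  rw [tendsto_zero_iff_norm_tendsto_zero]
  exact squeeze_zero (fun t => norm_nonneg _) (fun t => norm_f_le x k t)
    (tendsto_abs_aux |x| (abs_nonneg x) k)

lemma tendsto_f_atBot (x : ℝ) (k : ℕ) : Tendsto (f x k) atBot (𝓝 0) := by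
  rw [tendsto_zero_iff_norm_tendsto_zero]
  have hB : Tendsto (fun t : ℝ => (|x| + |t|) ^ k * Real.exp (-t ^ 2)) atBot (𝓝 0) := by
    have h := (tendsto_abs_aux |x| (abs_nonneg x) k).comp tendsto_neg_atBot_atTop
    refine h.congr fun t => ?_
    simp [Function.comp, abs_neg, neg_sq]
  exact squeeze_zero (fun t => norm_nonneg _) (fun t => norm_f_le x k t) hB

lemma hasDerivAt_f (x : ℝ) (k : ℕ) (t : ℝ) :
    HasDerivAt (f x (k+1))
      ((((k:ℂ)+1) * Complex.I) * f x k t + (-2) * ((t:ℂ) * f x (k+1) t)) t := by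
  have h1 : HasDerivAt (fun t : ℝ => (x:ℂ) + t * Complex.I) Complex.I t := by
    simpa using ((Complex.ofRealCLM.hasDerivAt (x := t)).mul_const Complex.I).const_add (x:ℂ)
  have hp : HasDerivAt (fun z : ℂ => z^(k+1))
      (((k:ℂ)+1) * ((x:ℂ)+t*Complex.I)^k) ((x:ℂ)+t*Complex.I) := by
    simpa using hasDerivAt_pow (k+1) ((x:ℂ)+t*Complex.I)
  have h2 := hp.scomp t h1
  have hsq : HasDerivAt (fun t : ℝ => -((t:ℂ))^2) (-(2*(t:ℂ))) t := by
    have h4 := ((Complex.ofRealCLM.hasDerivAt (x := t)).mul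
      (Complex.ofRealCLM.hasDerivAt (x := t))).neg
    simp only [Pi.mul_def, Pi.neg_def, Complex.ofRealCLM_apply] at h4
    refine (h4.congr_deriv (by push_cast; ring)).congr_of_eventuallyEq
      (Eventually.of_forall fun s => ?_)
    ring
  have h3 := hsq.cexp
  have h5 := h2.mul h3
  have heq : f x (k+1) = fun t : ℝ => ((fun z : ℂ => z^(k+1)) ∘ fun t : ℝ => (x:ℂ)+t*Complex.I) t
      * Complex.exp (-(t:ℂ)^2) := by
    funext s; simp [f, Function.comp]
  rw [heq]
  refine h5.congr_deriv ?_
  simp only [f, smul_eq_mul, Function.comp]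
  push_cast
  ring

lemma ibp (x : ℝ) (k : ℕ) :
    (((k:ℂ)+1) * Complex.I) * HI k x = 2 * ∫ t : ℝ, (t : ℂ) * f x (k+1) t := by
  set F' : ℝ → ℂ := fun t =>
    (((k:ℂ)+1) * Complex.I) * f x k t + (-2) * ((t:ℂ) * f x (k+1) t) with hF'
  have hint : Integrable F' :=
    ((integrable_f x k).const_mul _).add ((integrable_mul_f x (k+1)).const_mul _)
  have hd : ∀ t : ℝ, HasDerivAt (f x (k+1)) (F' t) t := fun t => hasDerivAt_f x k t
  have h1 : ∫ t in Iic (0:ℝ), F' t = f x (k+1) 0 - 0 :=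
    integral_Iic_of_hasDerivAt_of_tendsto (hd 0).continuousAt.continuousWithinAt
      (fun t _ => hd t) hint.integrableOn (tendsto_f_atBot x (k+1))
  have h2 : ∫ t in Ioi (0:ℝ), F' t = 0 - f x (k+1) 0 :=
    integral_Ioi_of_hasDerivAt_of_tendsto (hd 0).continuousAt.continuousWithinAt
      (fun t _ => hd t) hint.integrableOn (tendsto_f_atTop x (k+1))
  have hzero : ∫ t : ℝ, F' t = 0 := by
    rw [← intervalIntegral.integral_Iic_add_Ioi hint.integrableOn hint.integrableOn, h1, h2]
    ring
  rw [hF'] at hzero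
  rw [integral_add ((integrable_f x k).const_mul _) ((integrable_mul_f x (k+1)).const_mul _),
    integral_const_mul, integral_const_mul] at hzero
  unfold HI
  linear_combination hzero

lemma HI_zero (x : ℝ) : HI 0 x = ((Real.sqrt π : ℝ) : ℂ) := by
  have h : HI 0 x = ∫ t : ℝ, Complex.exp (-(1:ℂ) * (t:ℂ)^2) := by
    unfold HI f
    congr 1; funext t; simp
  rw [h, integral_gaussian_complex (by simp : (0:ℝ) < (1:ℂ).re)]
  rw [div_one, show ((1:ℂ)/2) = (((1:ℝ)/2 : ℝ) : ℂ) by norm_num,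
    ← Complex.ofReal_cpow pi_pos.le]
  norm_num [Real.sqrt_eq_rpow]

lemma odd_zero (x : ℝ) : ∫ t : ℝ, (t : ℂ) * f x 0 t = 0 := by
  have hfix : ∀ t : ℝ, ((-t : ℝ) : ℂ) * f x 0 (-t) = -((t:ℂ) * f x 0 t) := by
    intro t
    have e1 : f x 0 (-t) = f x 0 t := by
      simp only [f, pow_zero, one_mul, Complex.ofReal_neg, neg_sq]
    rw [e1]; push_cast; ring
  have h := MeasureTheory.integral_neg_eq_self (fun t : ℝ => (t:ℂ) * f x 0 t) volume
  simp only [hfix] at h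
  rw [integral_neg] at h
  exact (mul_eq_zero.mp (by linear_combination -h : (2:ℂ) * ∫ t : ℝ, (t:ℂ) * f x 0 t = 0)).resolve_left two_ne_zero

lemma HI_one (x : ℝ) : HI 1 x = ((Real.sqrt π * x : ℝ) : ℂ) := by
  have hsplit : ∀ t : ℝ, f x 1 t = (x:ℂ) * f x 0 t + ((t:ℂ) * f x 0 t) * Complex.I := by
    intro t; simp only [f, pow_zero, pow_one, one_mul]; ring
  unfold HI
  rw [integral_congr_ae (Eventually.of_forall hsplit) ]
  rw [integral_add ((integrable_f x 0).const_mul _) ((integrable_mul_f x 0).mul_const _),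
    integral_const_mul, integral_mul_const, odd_zero, zero_mul, add_zero]
  have h0 : ∫ t : ℝ, f x 0 t = HI 0 x := rfl
  rw [h0, HI_zero]
  push_cast; ring

lemma HI_rec (x : ℝ) (k : ℕ) :
    HI (k+2) x = (x:ℂ) * HI (k+1) x - ((k:ℂ)+1)/2 * HI k x := by
  have hibp := ibp x k
  have hsplit : ∀ t : ℝ, f x (k+2) t
      = (x:ℂ) * f x (k+1) t + Complex.I * ((t:ℂ) * f x (k+1) t) := by
    intro t; simp only [f, pow_succ]; ring
  have h1 : HI (k+2) x = (x:ℂ) * HI (k+1) x + Complex.I * ∫ t : ℝ, (t:ℂ) * f x (k+1) t := by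
    unfold HI
    rw [integral_congr_ae (Eventually.of_forall hsplit),
      integral_add ((integrable_f x (k+1)).const_mul _) ((integrable_mul_f x (k+1)).const_mul _),
      integral_const_mul, integral_const_mul]
  rw [h1]
  linear_combination (-(Complex.I)/2) * hibp + (((k:ℂ)+1)/2 * HI k x) * Complex.I_sq

lemma HI_eq (k : ℕ) (x : ℝ) :
    HI k x = ((Real.sqrt π / 2 ^ k * physHermiteFun k x : ℝ) : ℂ) := by
  induction k using Nat.strong_induction_on with
  | _ k ih =>
    match k with
    | 0 => simp [HI_zero, physHermiteFun]
    | 1 =>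
      rw [HI_one]
      simp only [physHermiteFun]
      push_cast; ring
    | (n+2) =>
      rw [HI_rec, ih (n+1) (by omega), ih n (by omega)]
      show _ = ((_ : ℝ) : ℂ)
      simp only [physHermiteFun]
      push_cast
      ring

lemma cexp_tsum (z : ℂ) : Complex.exp z = ∑' n : ℕ, z ^ n / n ! := by
  rw [Complex.exp_eq_exp_ℂ, NormedSpace.exp_eq_tsum_div]

lemma rexp_tsum (r : ℝ) : Real.exp r = ∑' n : ℕ, r ^ n / n ! := by
  rw [Real.exp_eq_exp_ℝ, NormedSpace.exp_eq_tsum_div]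

noncomputable def F (w x : ℝ) (k : ℕ) (p : ℝ × ℝ) : ℂ :=
  ((2 * w : ℝ) : ℂ) ^ k / (k ! : ℂ) * (f x k p.1 * f x k p.2)

noncomputable def Φ (w x : ℝ) (p : ℝ × ℝ) : ℂ :=
  Complex.exp (2 * (w:ℂ) * ((x:ℂ) + p.1 * Complex.I) * ((x:ℂ) + p.2 * Complex.I)
    - (p.1:ℂ)^2 - (p.2:ℂ)^2)

lemma norm_F {w : ℝ} (hw0 : 0 < w) (x : ℝ) (k : ℕ) (p : ℝ × ℝ) :
    ‖F w x k p‖ = (2 * w * ‖(x:ℂ) + p.1 * Complex.I‖ * ‖(x:ℂ) + p.2 * Complex.I‖) ^ k / k !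
      * (Real.exp (-p.1 ^ 2) * Real.exp (-p.2 ^ 2)) := by
  rw [F, norm_mul, norm_div, norm_pow, norm_mul, norm_f, norm_f]
  rw [Complex.norm_real, Real.norm_eq_abs, abs_of_pos (by linarith), Complex.norm_natCast]
  rw [mul_pow, mul_pow]
  ring

lemma continuous_F (w x : ℝ) (k : ℕ) : Continuous (F w x k) := by
  exact continuous_const.mul (((continuous_f x k).comp continuous_fst).mul
    ((continuous_f x k).comp continuous_snd))

lemma summand_nonneg {w : ℝ} (hw0 : 0 < w) (x : ℝ) (p : ℝ × ℝ) (k : ℕ) :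
    0 ≤ (2 * w * ‖(x:ℂ) + p.1 * Complex.I‖ * ‖(x:ℂ) + p.2 * Complex.I‖) ^ k / k !
      * (Real.exp (-p.1 ^ 2) * Real.exp (-p.2 ^ 2)) := by positivity

lemma step_swap {w : ℝ} (hw0 : 0 < w) (hw1 : w < 1) (x : ℝ) :
    ∑' k : ℕ, (((2 * w : ℝ) : ℂ) ^ k / (k ! : ℂ)) * HI k x ^ 2 = ∫ p : ℝ × ℝ, Φ w x p := by
  have hmeas : ∀ k : ℕ, AEStronglyMeasurable (F w x k) (volume : Measure (ℝ × ℝ)) :=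
    fun k => (continuous_F w x k).aestronglyMeasurable
  -- the individual terms
  have hterm : ∀ k : ℕ, (((2 * w : ℝ) : ℂ) ^ k / (k ! : ℂ)) * HI k x ^ 2
      = ∫ p : ℝ × ℝ, F w x k p := by
    intro k
    have hprod : ∫ p : ℝ × ℝ, f x k p.1 * f x k p.2 = (∫ t, f x k t) * (∫ t, f x k t) := by
      rw [Measure.volume_eq_prod ℝ ℝ, integral_prod_mul]
    calc (((2 * w : ℝ) : ℂ) ^ k / (k ! : ℂ)) * HI k x ^ 2
        = (((2 * w : ℝ) : ℂ) ^ k / (k ! : ℂ)) * ∫ p : ℝ × ℝ, f x k p.1 * f x k p.2 := by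
          rw [hprod, HI, pow_two]
      _ = ∫ p : ℝ × ℝ, F w x k p := by rw [← integral_const_mul]; rfl
  -- pointwise sum
  have hpt : ∀ p : ℝ × ℝ, ∑' k : ℕ, F w x k p = Φ w x p := by
    intro p
    have hz : ∀ k : ℕ, F w x k p
        = (2 * (w:ℂ) * ((x:ℂ) + p.1 * Complex.I) * ((x:ℂ) + p.2 * Complex.I)) ^ k / k !
          * (Complex.exp (-(p.1:ℂ)^2) * Complex.exp (-(p.2:ℂ)^2)) := by
      intro k
      simp only [F, f]
      rw [show 2*(w:ℂ)*((x:ℂ)+p.1*Complex.I)*((x:ℂ)+p.2*Complex.I)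
          = ((2*w:ℝ):ℂ)*(((x:ℂ)+p.1*Complex.I)*((x:ℂ)+p.2*Complex.I)) by push_cast; ring,
        mul_pow, mul_pow]
      ring
    rw [tsum_congr hz, tsum_mul_right, ← cexp_tsum, Φ, ← Complex.exp_add, ← Complex.exp_add]
    congr 1
    ring
  -- the summability condition
  have hsum : ∑' k : ℕ, ∫⁻ p : ℝ × ℝ, ‖F w x k p‖₊ ≠ ⊤ := by
    rw [← lintegral_tsum (fun k => (hmeas k).nnnorm.aemeasurable.coe_nnreal_ennreal)]
    set a : ℝ := (1 - w) / 2 with ha_def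
    have ha : 0 < a := by simp only [ha_def]; linarith
    set K : ℝ := Real.exp (2*w*x^2 + 4*w^2*x^2/(1-w)) with hK_def
    have hH : Integrable (fun p : ℝ × ℝ =>
        K * (Real.exp (-a * p.1^2) * Real.exp (-a * p.2^2))) := by
      have h2 := ((integrable_exp_neg_mul_sq ha).mul_prod (integrable_exp_neg_mul_sq ha)).const_mul K
      rwa [← Measure.volume_eq_prod] at h2
    have hptle : ∀ p : ℝ × ℝ, (∑' k : ℕ, (‖F w x k p‖₊ : ℝ≥0∞))
        ≤ ENNReal.ofReal (K * (Real.exp (-a * p.1^2) * Real.exp (-a * p.2^2))) := by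
      intro p
      set A := ‖(x:ℂ) + p.1 * Complex.I‖ with hA
      set B := ‖(x:ℂ) + p.2 * Complex.I‖ with hB
      have hsummable : Summable fun k : ℕ => (2*w*A*B)^k / k !
          * (Real.exp (-p.1 ^ 2) * Real.exp (-p.2 ^ 2)) :=
        (Real.summable_pow_div_factorial (2*w*A*B)).mul_right _
      have h1 : (∑' k : ℕ, (‖F w x k p‖₊ : ℝ≥0∞))
          = ENNReal.ofReal (Real.exp (2*w*A*B) * (Real.exp (-p.1 ^ 2) * Real.exp (-p.2 ^ 2))) := by
        calc (∑' k : ℕ, (‖F w x k p‖₊ : ℝ≥0∞))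
            = ∑' k : ℕ, ENNReal.ofReal ((2*w*A*B)^k / k !
                * (Real.exp (-p.1 ^ 2) * Real.exp (-p.2 ^ 2))) := by
              apply tsum_congr
              intro k
              rw [← enorm_eq_nnnorm, ← ofReal_norm, norm_F hw0]
          _ = ENNReal.ofReal (∑' k : ℕ, (2*w*A*B)^k / k !
                * (Real.exp (-p.1 ^ 2) * Real.exp (-p.2 ^ 2))) :=
              (ENNReal.ofReal_tsum_of_nonneg (summand_nonneg hw0 x p) hsummable).symm
          _ = ENNReal.ofReal (Real.exp (2*w*A*B) * (Real.exp (-p.1 ^ 2) * Real.exp (-p.2 ^ 2))) := by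
              rw [tsum_mul_right, ← rexp_tsum]
      rw [h1]
      apply ENNReal.ofReal_le_ofReal
      have hA0 : 0 ≤ A := norm_nonneg _
      have hB0 : 0 ≤ B := norm_nonneg _
      have hAle : A ≤ |x| + |p.1| := norm_base_le x p.1
      have hBle : B ≤ |x| + |p.2| := norm_base_le x p.2
      have hcomb : Real.exp (2*w*A*B) * (Real.exp (-p.1 ^ 2) * Real.exp (-p.2 ^ 2))
          = Real.exp (2*w*A*B - p.1^2 - p.2^2) := by
        rw [← Real.exp_add, ← Real.exp_add]; ring_nf
      have hcomb2 : K * (Real.exp (-a * p.1^2) * Real.exp (-a * p.2^2))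
          = Real.exp ((2*w*x^2 + 4*w^2*x^2/(1-w)) - a * p.1^2 - a * p.2^2) := by
        rw [hK_def, ← Real.exp_add, ← Real.exp_add]; ring_nf
      rw [hcomb, hcomb2]
      apply Real.exp_le_exp.2
      have h1w : (0:ℝ) < 1 - w := by linarith
      have hK' : (1-w) * (4*w^2*x^2/(1-w)) = 4*w^2*x^2 := by field_simp
      have hstep : 2*w*A*B ≤ 2*w*(|x| + |p.1|)*(|x| + |p.2|) := by
        have := mul_le_mul hAle hBle hB0 (by positivity)
        nlinarith
      have hX : (0:ℝ) ≤ |x| := abs_nonneg x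
      have hu : (0:ℝ) ≤ |p.1| := abs_nonneg _
      have hv : (0:ℝ) ≤ |p.2| := abs_nonneg _
      have hu2 : |p.1|^2 = p.1^2 := sq_abs _
      have hv2 : |p.2|^2 = p.2^2 := sq_abs _
      have hx2 : |x|^2 = x^2 := sq_abs _
      simp only [ha_def]
      nlinarith [sq_nonneg ((1-w)*|p.1| - 2*w*|x|), sq_nonneg ((1-w)*|p.2| - 2*w*|x|),
        mul_nonneg (mul_nonneg hw0.le h1w.le) (sq_nonneg (|p.1| - |p.2|)), hK', hstep]
    have hlt : ∫⁻ p : ℝ × ℝ, ∑' k : ℕ, (‖F w x k p‖₊ : ℝ≥0∞) < ⊤ := calc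
      ∫⁻ p : ℝ × ℝ, ∑' k : ℕ, (‖F w x k p‖₊ : ℝ≥0∞)
        ≤ ∫⁻ p : ℝ × ℝ, ENNReal.ofReal (K * (Real.exp (-a * p.1^2) * Real.exp (-a * p.2^2))) :=
          lintegral_mono hptle
      _ ≤ ∫⁻ p : ℝ × ℝ, (‖K * (Real.exp (-a * p.1^2) * Real.exp (-a * p.2^2))‖₊ : ℝ≥0∞) :=
          lintegral_mono fun p => Real.ofReal_le_enorm _
      _ < ⊤ := hH.2
    exact hlt.ne
  rw [tsum_congr hterm, ← integral_tsum hmeas hsum]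
  exact integral_congr_ae (Eventually.of_forall hpt)

lemma step_gauss {w : ℝ} (hw0 : 0 < w) (hw1 : w < 1) (x : ℝ) :
    ∫ p : ℝ × ℝ, Φ w x p
      = ((π / Real.sqrt (1 - w^2) * Real.exp (2*w*x^2/(1+w)) : ℝ) : ℂ) := by
  have h1w : (0:ℝ) < 1 - w^2 := by nlinarith
  have h1w' : (0:ℝ) < 1 - w := by linarith
  have hΦcont : Continuous (Φ w x) := by
    unfold Φ; fun_prop
  have hΦint : Integrable (Φ w x) := by
    have hint : Integrable (fun p : ℝ × ℝ =>
        Real.exp (2*w*x^2) * (Real.exp (-(1-w) * p.1^2) * Real.exp (-(1-w) * p.2^2))) := by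
      have h2 := ((integrable_exp_neg_mul_sq h1w').mul_prod
        (integrable_exp_neg_mul_sq h1w')).const_mul (Real.exp (2*w*x^2))
      rwa [← Measure.volume_eq_prod] at h2
    refine hint.mono' hΦcont.aestronglyMeasurable (Eventually.of_forall fun p => ?_)
    have hre : 2 * (w:ℂ) * ((x:ℂ) + p.1 * Complex.I) * ((x:ℂ) + p.2 * Complex.I)
        - (p.1:ℂ)^2 - (p.2:ℂ)^2
        = ((2*w*(x^2 - p.1*p.2) - p.1^2 - p.2^2 : ℝ) : ℂ)
          + ((2*w*x*(p.1+p.2) : ℝ) : ℂ) * Complex.I := by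
      push_cast
      linear_combination (2*(w:ℂ)*(p.1:ℂ)*(p.2:ℂ)) * Complex.I_sq
    rw [Φ, hre, Complex.norm_exp]
    simp only [Complex.add_re, Complex.ofReal_re, Complex.mul_re, Complex.ofReal_im,
      Complex.I_re, Complex.I_im, mul_zero, zero_mul, sub_zero, mul_one, zero_sub, add_zero]
    have hcomb : Real.exp (2*w*x^2) * (Real.exp (-(1-w) * p.1^2) * Real.exp (-(1-w) * p.2^2))
        = Real.exp (2*w*x^2 - (1-w) * p.1^2 - (1-w) * p.2^2) := by
      rw [← Real.exp_add, ← Real.exp_add]; ring_nf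
    rw [hcomb]
    apply Real.exp_le_exp.2
    nlinarith [sq_nonneg (p.1 + p.2), hw0]
  rw [Measure.volume_eq_prod ℝ ℝ] at hΦint ⊢
  rw [MeasureTheory.integral_prod _ hΦint]
  have hinner : ∀ s : ℝ, (∫ t : ℝ, Φ w x (s, t))
      = (π:ℂ) ^ ((1:ℂ)/2) * Complex.exp (((w^2-1 : ℝ):ℂ) * (s:ℂ)^2
          + (((2*w*x*(1-w) : ℝ):ℂ) * Complex.I) * (s:ℂ) + ((2*w-w^2)*x^2 : ℝ)) := by
    intro s
    have hform : ∀ t : ℝ, Φ w x (s, t)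
        = Complex.exp ((-1:ℂ) * (t:ℂ)^2 + (2*(w:ℂ)*((x:ℂ)+s*Complex.I)*Complex.I) * (t:ℂ)
            + (2*(w:ℂ)*(x:ℂ)*((x:ℂ)+s*Complex.I) - (s:ℂ)^2)) := by
      intro t; rw [Φ]; congr 1; push_cast; ring
    rw [integral_congr_ae (Eventually.of_forall hform),
      integral_cexp_quadratic (by norm_num : (-1:ℂ).re < 0)]
    congr 1
    · norm_num
    · congr 1
      push_cast
      linear_combination ((w:ℂ)^2*(x:ℂ)^2 + 2*(w:ℂ)^2*(x:ℂ)*(s:ℂ)*Complex.I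
        + (w:ℂ)^2*(s:ℂ)^2*(Complex.I^2-1)) * Complex.I_sq
  rw [integral_congr_ae (Eventually.of_forall hinner), integral_const_mul]
  have houter : (∫ s : ℝ, Complex.exp (((w^2-1 : ℝ):ℂ) * (s:ℂ)^2
        + (((2*w*x*(1-w) : ℝ):ℂ) * Complex.I) * (s:ℂ) + ((2*w-w^2)*x^2 : ℝ)))
      = ((π:ℂ) / -((w^2-1 : ℝ):ℂ)) ^ ((1:ℂ)/2)
        * Complex.exp (((2*w-w^2)*x^2 : ℝ)
          - (((2*w*x*(1-w) : ℝ):ℂ) * Complex.I)^2 / (4 * ((w^2-1 : ℝ):ℂ))) := by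
    have hbre : (((w^2-1 : ℝ):ℂ)).re < 0 := by
      rw [Complex.ofReal_re]; nlinarith
    exact integral_cexp_quadratic hbre _ _
  rw [houter]
  have hbase : ((π:ℂ) / -((w^2-1 : ℝ):ℂ)) = (((π/(1-w^2) : ℝ)) : ℂ) := by push_cast; ring
  have hIsq : (((2*w*x*(1-w) : ℝ):ℂ) * Complex.I)^2 = ((-( (2*w*x*(1-w))^2) : ℝ) : ℂ) := by
    rw [mul_pow, Complex.I_sq]; push_cast; ring
  have hexp : (((2*w-w^2)*x^2 : ℝ) : ℂ)
        - ((-( (2*w*x*(1-w))^2) : ℝ) : ℂ) / (4 * ((w^2-1 : ℝ):ℂ))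
      = ((2*w*x^2/(1+w) : ℝ) : ℂ) := by
    have : ((2*w-w^2)*x^2 : ℝ) - (-( (2*w*x*(1-w))^2)) / (4 * (w^2-1))
        = 2*w*x^2/(1+w) := by
      have h2 : w^2 - 1 ≠ 0 := by nlinarith
      have h3 : 1 + w ≠ 0 := by nlinarith
      field_simp
      ring
    rw [← this]; push_cast; ring
  rw [hIsq, hexp, hbase]
  rw [show ((1:ℂ)/2) = (((1/2 : ℝ)) : ℂ) by norm_num,
    ← Complex.ofReal_cpow pi_pos.le, ← Complex.ofReal_cpow (by positivity : (0:ℝ) ≤ π/(1-w^2)),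
    ← Complex.ofReal_exp, ← Complex.ofReal_mul, ← Complex.ofReal_mul, Complex.ofReal_inj]
  rw [← Real.sqrt_eq_rpow, ← Real.sqrt_eq_rpow, Real.sqrt_div pi_pos.le]
  linear_combination (Real.exp (2*w*x^2/(1+w)) / Real.sqrt (1-w^2)) * Real.mul_self_sqrt pi_pos.le

end MehlerAux

lemma real_coeff (w x : ℝ) (k : ℕ) :
    hermiteFun k x ^ 2 * w ^ k
      = ((2*π)^((1:ℝ)/2) * Real.exp (-x^2) / (π * Real.sqrt π))
        * ((2*w)^k / k ! * (Real.sqrt π / 2^k * physHermiteFun k x)^2) := by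
  have h1 : ((2*π)^((1:ℝ)/4))^2 = (2*π)^((1:ℝ)/2) := by
    rw [← Real.rpow_natCast ((2*π)^((1:ℝ)/4)) 2, ← Real.rpow_mul (by positivity)]
    norm_num
  have h2 : (Real.sqrt (2^k * (k ! : ℝ) * Real.sqrt π))^2 = 2^k * (k ! : ℝ) * Real.sqrt π :=
    Real.sq_sqrt (by positivity)
  have h4 : Real.sqrt π ^ 2 = π := Real.sq_sqrt pi_pos.le
  have h3 : Real.exp (-x^2/2)^2 = Real.exp (-x^2) := by
    rw [sq, ← Real.exp_add]; congr 1; ring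
  have hlhs : hermiteFun k x ^ 2
      = (2*π)^((1:ℝ)/2) * (2^k * (k ! : ℝ) * Real.sqrt π)⁻¹
        * physHermiteFun k x ^ 2 * Real.exp (-x^2) := by
    rw [hermiteFun, mul_pow, mul_pow, mul_pow, h1, inv_pow, h2, h3]
  have h5 : (Real.sqrt π / 2^k * physHermiteFun k x)^2
      = π / ((2:ℝ)^k)^2 * physHermiteFun k x^2 := by
    rw [mul_pow, div_pow, h4]
  rw [hlhs, mul_pow 2 w k, h5]
  have hπ : π ≠ 0 := pi_ne_zero
  have hsπ : Real.sqrt π ≠ 0 := by positivity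
  have hk : (k ! : ℝ) ≠ 0 := by positivity
  have h2k : (2:ℝ)^k ≠ 0 := by positivity
  field_simp

theorem mehler_diagonal (w : ℝ) (hw0 : 0 < w) (hw1 : w < 1) (x : ℝ) :
    ∑' k : ℕ, (hermiteFun k x) ^ 2 * w ^ k
      = Real.sqrt 2 * (Real.sqrt (1 - w ^ 2))⁻¹
        * Real.exp (-((1 - w) / (1 + w)) * x ^ 2) := by
  have key : ∀ k : ℕ, ((hermiteFun k x ^ 2 * w ^ k : ℝ) : ℂ)
      = (((2*π)^((1:ℝ)/2) * Real.exp (-x^2) / (π * Real.sqrt π) : ℝ) : ℂ) * ((((2*w:ℝ)):ℂ)^k / (k ! : ℂ) * MehlerAux.HI k x ^ 2) := by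
    intro k
    rw [real_coeff w x k, MehlerAux.HI_eq k x]
    push_cast
    ring
  apply Complex.ofReal_injective
  rw [Complex.ofReal_tsum]
  calc ∑' k : ℕ, ((hermiteFun k x ^ 2 * w ^ k : ℝ) : ℂ)
      = ∑' k : ℕ, (((2*π)^((1:ℝ)/2) * Real.exp (-x^2) / (π * Real.sqrt π) : ℝ) : ℂ) * ((((2*w:ℝ)):ℂ)^k / (k ! : ℂ) * MehlerAux.HI k x ^ 2) :=
        tsum_congr key
    _ = (((2*π)^((1:ℝ)/2) * Real.exp (-x^2) / (π * Real.sqrt π) : ℝ) : ℂ) * ∑' k : ℕ, ((((2*w:ℝ)):ℂ)^k / (k ! : ℂ) * MehlerAux.HI k x ^ 2) :=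
        tsum_mul_left
    _ = (((2*π)^((1:ℝ)/2) * Real.exp (-x^2) / (π * Real.sqrt π) : ℝ) : ℂ) * ((π / Real.sqrt (1 - w^2) * Real.exp (2*w*x^2/(1+w)) : ℝ) : ℂ) := by
        rw [MehlerAux.step_swap hw0 hw1 x, MehlerAux.step_gauss hw0 hw1 x]
    _ = ((Real.sqrt 2 * (Real.sqrt (1 - w ^ 2))⁻¹
          * Real.exp (-((1 - w) / (1 + w)) * x ^ 2) : ℝ) : ℂ) := by
        rw [← Complex.ofReal_mul, Complex.ofReal_inj]
        have hsplit : (2*π)^((1:ℝ)/2) = Real.sqrt 2 * Real.sqrt π := by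
          rw [← Real.sqrt_eq_rpow, Real.sqrt_mul (by norm_num : (0:ℝ) ≤ 2)]
        have h1pw : (1:ℝ) + w ≠ 0 := by linarith
        have hexpc : Real.exp (-x^2) * Real.exp (2*w*x^2/(1+w))
            = Real.exp (-((1-w)/(1+w))*x^2) := by
          rw [← Real.exp_add]; congr 1; field_simp; ring
        have h1w2 : (0:ℝ) < 1 - w^2 := by nlinarith
        have hsq : Real.sqrt (1 - w^2) ≠ 0 := by positivity
        have hsπ : Real.sqrt π ≠ 0 := by positivity
        rw [hsplit, ← hexpc]
        field_simp
end
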